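/- Let ν ≥ 3 and let Ψ be a set of coverings with #Ψ ≥ 2 which is neither flat nor a pole, and let E be a nonempty proper subset of Γ_{2ν} with complement E'. Then F_Ψ splits across the bipartition (E,E') if and only if Ψ is criss-cross via E, that is: Ψ is decomposable via E, and for all subsets A₁, B₁, A₂, B₂ with ∅ ≠ A₁ ⊊ E∩A, ∅ ≠ B₁ ⊊ E∩B, ∅ ≠ A₂ ⊊ E'∩A, ∅ ≠ B₂ ⊊ E'∩B, the counting identity u·v = s·w holds, where s = #Ψ, u = #{ψ∈Ψ : ψ(A₁) = B₁}, v = #{ψ∈Ψ : ψ(A₂) = B₂}, and w = #{ψ∈Ψ : ψ(A₁) = B₁ and ψ(A₂) = B₂}. Consequently, F_Ψ splits across no nontrivial bipartition (genuine multipartite entanglement of |Ψ⟩) if and only if Ψ is criss-cross via no nonempty proper E. -/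

import Mathlib

open MvPolynomial Finset

noncomputable section

/-- The odd-labelled site `2t−1` of the paper (`t`-th site of sublattice `A`),
zero-indexed as `2t` in `Fin (2ν)`. -/
def siteA (ν : ℕ) (t : Fin ν) : Fin (2 * ν) := ⟨2 * t.val, by have := t.isLt; omega⟩

/-- The even-labelled site `2t` of the paper (`t`-th site of sublattice `B`),
zero-indexed as `2t+1` in `Fin (2ν)`. -/
def siteB (ν : ℕ) (t : Fin ν) : Fin (2 * ν) := ⟨2 * t.val + 1, by have := t.isLt; omega⟩

/-- A covering is a bijection `ψ : A → B`; it is encoded by the permutation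
`σ` of `Fin ν` with `ψ(siteA t) = siteB (σ t)`.  Its covering polynomial is
`F_ψ = ∏_{a∈A} (X_{ψ(a)} − X_a)`. -/
def covPoly (ν : ℕ) (σ : Equiv.Perm (Fin ν)) : MvPolynomial (Fin (2 * ν)) ℂ :=
  ∏ t : Fin ν, (X (siteB ν (σ t)) - X (siteA ν t))

/-- `F` splits across the bipartition `(E, Eᶜ)`. -/
def SplitsAcross {n : ℕ} (F : MvPolynomial (Fin n) ℂ) (E : Finset (Fin n)) : Prop :=
  ∃ p q : MvPolynomial (Fin n) ℂ, F = p * q ∧ p.vars ⊆ E ∧ q.vars ⊆ Eᶜ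

/-- `ψ(E ∩ A) = E ∩ B` for the covering `ψ` encoded by `σ`
(here `E ∩ B` is the set of odd-indexed, i.e. `B`-sublattice, elements of `E`). -/
def MapsCut (ν : ℕ) (σ : Equiv.Perm (Fin ν)) (E : Finset (Fin (2 * ν))) : Prop :=
  ((Finset.univ.filter (fun t => siteA ν t ∈ E)).image fun t => siteB ν (σ t))
    = E.filter (fun x => x.val % 2 = 1)


/-- The (unnormalized) RVB polynomial `F_Ψ = Σ_{ψ∈Ψ} F_ψ`. -/
def rvbPoly (ν : ℕ) (Ψ : Finset (Equiv.Perm (Fin ν))) : MvPolynomial (Fin (2 * ν)) ℂ :=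
  ∑ σ ∈ Ψ, covPoly ν σ

/-- `Ψ` is flat via `E`: decomposable via `E` and all coverings in `Ψ` have the
same restriction to `E' ∩ A`. -/
def FlatVia (ν : ℕ) (Ψ : Finset (Equiv.Perm (Fin ν))) (E : Finset (Fin (2 * ν))) : Prop :=
  (∀ σ ∈ Ψ, MapsCut ν σ E) ∧
  ∀ σ₁ ∈ Ψ, ∀ σ₂ ∈ Ψ, ∀ t : Fin ν, siteA ν t ∉ E → σ₁ t = σ₂ t

/-- `Ψ` is a pole via `E`: decomposable via `E` and all coverings in `Ψ` have the
same restriction to `E ∩ A`. -/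
def PoleVia (ν : ℕ) (Ψ : Finset (Equiv.Perm (Fin ν))) (E : Finset (Fin (2 * ν))) : Prop :=
  (∀ σ ∈ Ψ, MapsCut ν σ E) ∧
  ∀ σ₁ ∈ Ψ, ∀ σ₂ ∈ Ψ, ∀ t : Fin ν, siteA ν t ∈ E → σ₁ t = σ₂ t

/-- `Ψ` is criss-cross via `E`: it is decomposable via `E`, and for all nonempty
proper `A₁ ⊊ E∩A`, `B₁ ⊊ E∩B`, `A₂ ⊊ E'∩A`, `B₂ ⊊ E'∩B` (encoded as subsets
`T₁, U₁, T₂, U₂` of `Fin ν`), the counting identity `u·v = s·w` holds, where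
`u = #{ψ : ψ(A₁)=B₁}`, `v = #{ψ : ψ(A₂)=B₂}`, `w = #{ψ : both}`, `s = #Ψ`. -/
def CrissCrossVia (ν : ℕ) (Ψ : Finset (Equiv.Perm (Fin ν)))
    (E : Finset (Fin (2 * ν))) : Prop :=
  (∀ σ ∈ Ψ, MapsCut ν σ E) ∧
  ∀ T₁ U₁ T₂ U₂ : Finset (Fin ν),
    T₁ ⊆ Finset.univ.filter (fun t => siteA ν t ∈ E) → T₁.Nonempty →
    T₁ ≠ Finset.univ.filter (fun t => siteA ν t ∈ E) →
    U₁ ⊆ Finset.univ.filter (fun u => siteB ν u ∈ E) → U₁.Nonempty →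
    U₁ ≠ Finset.univ.filter (fun u => siteB ν u ∈ E) →
    T₂ ⊆ Finset.univ.filter (fun t => siteA ν t ∉ E) → T₂.Nonempty →
    T₂ ≠ Finset.univ.filter (fun t => siteA ν t ∉ E) →
    U₂ ⊆ Finset.univ.filter (fun u => siteB ν u ∉ E) → U₂.Nonempty →
    U₂ ≠ Finset.univ.filter (fun u => siteB ν u ∉ E) →
    (Ψ.filter (fun σ => T₁.image (fun t => σ t) = U₁)).card *
        (Ψ.filter (fun σ => T₂.image (fun t => σ t) = U₂)).card
      = Ψ.card *
        (Ψ.filter (fun σ =>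
          T₁.image (fun t => σ t) = U₁ ∧ T₂.image (fun t => σ t) = U₂)).card

section Aux

open Finsupp

variable {ν : ℕ}

lemma siteA_injective : Function.Injective (siteA ν) := fun t t' h => by
  have := congrArg Fin.val h; simp only [siteA] at this; exact Fin.ext (by omega)

lemma siteB_injective : Function.Injective (siteB ν) := fun t t' h => by
  have := congrArg Fin.val h; simp only [siteB] at this; exact Fin.ext (by omega)

lemma siteA_ne_siteB (t u : Fin ν) : siteA ν t ≠ siteB ν u := fun h => by
  have := congrArg Fin.val h; simp only [siteA, siteB] at this; omega

lemma siteA_eq_siteB_iff {t u : Fin ν} : siteA ν t = siteB ν u ↔ False :=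
  iff_false_intro (siteA_ne_siteB t u)

lemma siteB_eq_siteA_iff {t u : Fin ν} : siteB ν u = siteA ν t ↔ False :=
  iff_false_intro (Ne.symm (siteA_ne_siteB t u))

/-- The exponent of the multilinear monomial `∏_{t∈K} X_{A t} ∏_{u∈S} X_{B u}`. -/
def eKS (ν : ℕ) (K S : Finset (Fin ν)) : Fin (2 * ν) →₀ ℕ :=
  (∑ t ∈ K, Finsupp.single (siteA ν t) 1) + ∑ u ∈ S, Finsupp.single (siteB ν u) 1

lemma eKS_apply_A (K S : Finset (Fin ν)) (t : Fin ν) :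
    eKS ν K S (siteA ν t) = if t ∈ K then 1 else 0 := by
  classical
  simp [eKS, Finsupp.finset_sum_apply, Finsupp.single_apply,
    siteA_injective.eq_iff, siteB_eq_siteA_iff]

lemma eKS_apply_B (K S : Finset (Fin ν)) (u : Fin ν) :
    eKS ν K S (siteB ν u) = if u ∈ S then 1 else 0 := by
  classical
  simp [eKS, Finsupp.finset_sum_apply, Finsupp.single_apply,
    siteB_injective.eq_iff, siteA_eq_siteB_iff]

lemma eKS_inj {K S K' S' : Finset (Fin ν)} (h : eKS ν K S = eKS ν K' S') :
    K = K' ∧ S = S' := by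
  constructor
  · ext t
    have := congrArg (fun f => f (siteA ν t)) h
    simp only [eKS_apply_A] at this
    by_cases h1 : t ∈ K <;> by_cases h2 : t ∈ K' <;> simp_all
  · ext u
    have := congrArg (fun f => f (siteB ν u)) h
    simp only [eKS_apply_B] at this
    by_cases h1 : u ∈ S <;> by_cases h2 : u ∈ S' <;> simp_all

end Aux
section Aux2

variable {ν : ℕ}

lemma eKS_support_subset (K S : Finset (Fin ν)) :
    (eKS ν K S).support ⊆ K.image (siteA ν) ∪ S.image (siteB ν) := by
  classical
  intro x hx
  rw [Finsupp.mem_support_iff] at hx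
  by_contra hc
  simp only [Finset.mem_union, Finset.mem_image, not_or, not_exists, not_and] at hc
  apply hx
  simp only [eKS, Finsupp.add_apply, Finsupp.finset_sum_apply, Finsupp.single_apply]
  rw [Finset.sum_eq_zero, Finset.sum_eq_zero, add_zero]
  · intro u hu; rw [if_neg (hc.2 u hu)]
  · intro t ht; rw [if_neg (hc.1 t ht)]

lemma eKS_union {K₁ K₂ S₁ S₂ : Finset (Fin ν)} (hK : Disjoint K₁ K₂)
    (hS : Disjoint S₁ S₂) :
    eKS ν (K₁ ∪ K₂) (S₁ ∪ S₂) = eKS ν K₁ S₁ + eKS ν K₂ S₂ := by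
  classical
  simp only [eKS, Finset.sum_union hK, Finset.sum_union hS]
  abel

lemma prod_X_eq_monomial {α : Type*} (s : Finset α) (f : α → Fin (2 * ν)) :
    (∏ a ∈ s, (X (f a) : MvPolynomial (Fin (2 * ν)) ℂ))
      = monomial (∑ a ∈ s, Finsupp.single (f a) 1) 1 := by
  classical
  induction s using Finset.cons_induction with
  | empty => simp
  | cons a s ha ih =>
      rw [Finset.prod_cons, Finset.sum_cons, ih, X, monomial_mul, one_mul]

/-- The partial covering polynomial over a subset `W` of the `A`-sublattice. -/
def PP (ν : ℕ) (W : Finset (Fin ν)) (σ : Equiv.Perm (Fin ν)) :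
    MvPolynomial (Fin (2 * ν)) ℂ :=
  ∏ t ∈ W, (X (siteB ν (σ t)) - X (siteA ν t))

lemma covPoly_eq_PP (σ : Equiv.Perm (Fin ν)) : covPoly ν σ = PP ν Finset.univ σ := rfl

lemma PP_eq_sum (W : Finset (Fin ν)) (σ : Equiv.Perm (Fin ν)) :
    PP ν W σ = ∑ K ∈ W.powerset,
      monomial (eKS ν K ((W \ K).image fun t => σ t)) ((-1 : ℂ) ^ K.card) := by
  classical
  rw [PP, Finset.prod_sub]
  apply Finset.sum_congr rfl
  intro K hK
  rw [prod_X_eq_monomial, prod_X_eq_monomial]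
  have himg : (∑ t ∈ W \ K, Finsupp.single (siteB ν (σ t)) 1)
      = ∑ u ∈ (W \ K).image (fun t => σ t), Finsupp.single (siteB ν u) 1 := by
    rw [Finset.sum_image]
    intro a _ b _ h; exact σ.injective h
  rw [mul_assoc, monomial_mul, one_mul, himg]
  have hC : ((-1 : MvPolynomial (Fin (2 * ν)) ℂ)) ^ K.card
      = C ((-1 : ℂ) ^ K.card) := by simp
  rw [hC, C_mul_monomial, mul_one]
  exact congrArg (fun d => monomial d ((-1 : ℂ) ^ K.card))
    (by unfold eKS; exact add_comm _ _)


lemma coeff_PP (W : Finset (Fin ν)) (σ : Equiv.Perm (Fin ν)) (K S : Finset (Fin ν)) :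
    coeff (eKS ν K S) (PP ν W σ)
      = if K ⊆ W ∧ (W \ K).image (fun t => σ t) = S then (-1 : ℂ) ^ K.card else 0 := by
  classical
  rw [PP_eq_sum, coeff_sum]
  simp only [coeff_monomial]
  have hterm : ∀ K' ∈ W.powerset,
      (if eKS ν K' ((W \ K').image fun t => σ t) = eKS ν K S
          then ((-1 : ℂ)) ^ K'.card else 0)
        = if K' = K
            then (if (W \ K').image (fun t => σ t) = S then (-1 : ℂ) ^ K'.card else 0)
            else 0 := by
    intro K' _
    by_cases h1 : K' = K
    · subst h1
      by_cases h2 : (W \ K').image (fun t => σ t) = S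
      · rw [if_pos (by rw [h2]), if_pos rfl, if_pos h2]
      · rw [if_neg (fun h => h2 (eKS_inj h).2), if_pos rfl, if_neg h2]
    · rw [if_neg (fun h => h1 (eKS_inj h).1), if_neg h1]
  rw [Finset.sum_congr rfl hterm, Finset.sum_ite_eq' W.powerset K _]
  by_cases hKW : K ⊆ W
  · rw [if_pos (Finset.mem_powerset.2 hKW)]
    by_cases h2 : (W \ K).image (fun t => σ t) = S
    · rw [if_pos h2, if_pos ⟨hKW, h2⟩]
    · rw [if_neg h2, if_neg (fun h => h2 h.2)]
  · rw [if_neg (fun h => hKW (Finset.mem_powerset.1 h)), if_neg (fun h => hKW h.1)]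

end Aux2
section Aux3

variable {ν : ℕ}

lemma coeff_PP_shape {W : Finset (Fin ν)} {σ : Equiv.Perm (Fin ν)}
    {d : Fin (2 * ν) →₀ ℕ} (h : coeff d (PP ν W σ) ≠ 0) :
    ∃ K S : Finset (Fin ν), K ⊆ W ∧ d = eKS ν K S := by
  classical
  rw [PP_eq_sum, coeff_sum] at h
  obtain ⟨K, hK, hne⟩ := Finset.exists_ne_zero_of_sum_ne_zero h
  rw [coeff_monomial] at hne
  by_cases hc : eKS ν K ((W \ K).image fun t => σ t) = d
  · exact ⟨K, _, Finset.mem_powerset.1 hK, hc.symm⟩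
  · rw [if_neg hc] at hne; exact absurd rfl hne

lemma coeff_rvb (Ψ : Finset (Equiv.Perm (Fin ν))) (K S : Finset (Fin ν)) :
    coeff (eKS ν K S) (rvbPoly ν Ψ)
      = (-1 : ℂ) ^ K.card
        * ((Ψ.filter fun σ => Kᶜ.image (fun t => σ t) = S).card : ℂ) := by
  classical
  rw [rvbPoly, coeff_sum]
  have : ∀ σ ∈ Ψ, coeff (eKS ν K S) (covPoly ν σ)
      = if Kᶜ.image (fun t => σ t) = S then (-1 : ℂ) ^ K.card else 0 := by
    intro σ _
    rw [covPoly_eq_PP, coeff_PP]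
    rw [← Finset.compl_eq_univ_sdiff]
    by_cases h : Kᶜ.image (fun t => σ t) = S
    · rw [if_pos ⟨Finset.subset_univ K, h⟩, if_pos h]
    · rw [if_neg (fun hc => h hc.2), if_neg h]
  rw [Finset.sum_congr rfl this, ← Finset.sum_filter, Finset.sum_const, nsmul_eq_mul,
    mul_comm]

set_option maxHeartbeats 2000000 in
lemma coeff_mul_of_separated {n : ℕ} {p q : MvPolynomial (Fin n) ℂ}
    {E : Finset (Fin n)} (hp : p.vars ⊆ E) (hq : q.vars ⊆ Eᶜ)
    {d₁ d₂ : Fin n →₀ ℕ} (h₁ : d₁.support ⊆ E) (h₂ : d₂.support ⊆ Eᶜ) :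
    coeff (d₁ + d₂) (p * q) = coeff d₁ p * coeff d₂ q := by
  rw [coeff_mul]
  apply Finset.sum_eq_single (d₁, d₂)
  · rintro ⟨a, b⟩ hab hne
    rw [Finset.HasAntidiagonal.mem_antidiagonal] at hab
    by_contra hz
    have ha : coeff a p ≠ 0 := fun h => hz (by rw [h, zero_mul])
    have hb : coeff b q ≠ 0 := fun h => hz (by rw [h, mul_zero])
    have hsa : a.support ⊆ E := by
      intro i hi
      exact hp ((mem_vars i).2 ⟨a, (mem_support_iff).2 ha, hi⟩)
    have hsb : b.support ⊆ Eᶜ := by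
      intro i hi
      exact hq ((mem_vars i).2 ⟨b, (mem_support_iff).2 hb, hi⟩)
    apply hne
    have key : ∀ i, a i = d₁ i ∧ b i = d₂ i := by
      intro i
      have hsum : a i + b i = d₁ i + d₂ i := by
        rw [← Finsupp.add_apply, ← Finsupp.add_apply, hab]
      by_cases hiE : i ∈ E
      · have hb0 : b i = 0 := by
          by_contra hb0
          exact absurd (hsb (Finsupp.mem_support_iff.2 hb0)) (by simpa using hiE)
        have hd0 : d₂ i = 0 := by
          by_contra hd0
          exact absurd (h₂ (Finsupp.mem_support_iff.2 hd0)) (by simpa using hiE)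
        constructor <;> omega
      · have ha0 : a i = 0 := by
          by_contra ha0
          exact hiE (hsa (Finsupp.mem_support_iff.2 ha0))
        have hd0 : d₁ i = 0 := by
          by_contra hd0
          exact hiE (h₁ (Finsupp.mem_support_iff.2 hd0))
        constructor <;> omega
    have : a = d₁ := Finsupp.ext fun i => (key i).1
    have hb' : b = d₂ := Finsupp.ext fun i => (key i).2
    rw [Prod.mk.injEq]
    exact ⟨this, hb'⟩
  · intro h
    rw [Finset.HasAntidiagonal.mem_antidiagonal] at h
    exact absurd rfl h

lemma vars_PP_subset {W : Finset (Fin ν)} {σ : Equiv.Perm (Fin ν)}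
    {G : Finset (Fin (2 * ν))}
    (h : ∀ t ∈ W, siteA ν t ∈ G ∧ siteB ν (σ t) ∈ G) :
    (PP ν W σ).vars ⊆ G := by
  classical
  refine (vars_prod _).trans ?_
  intro i hi
  rw [Finset.mem_biUnion] at hi
  obtain ⟨t, ht, hi⟩ := hi
  have hsub : (X (siteB ν (σ t)) - X (siteA ν t) : MvPolynomial (Fin (2 * ν)) ℂ).vars
      ⊆ {siteB ν (σ t)} ∪ {siteA ν t} := by
    rw [sub_eq_add_neg]
    refine (vars_add_subset _ _).trans ?_
    rw [vars_neg, vars_X, vars_X]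
  rcases Finset.mem_union.1 (hsub hi) with h' | h' <;>
    rw [Finset.mem_singleton] at h'
  · exact h' ▸ (h t ht).2
  · exact h' ▸ (h t ht).1

lemma image_perm_compl (σ : Equiv.Perm (Fin ν)) (K : Finset (Fin ν)) :
    Kᶜ.image (fun t => σ t) = (K.image fun t => σ t)ᶜ := by
  classical
  ext u
  simp only [Finset.mem_image, Finset.mem_compl]
  constructor
  · rintro ⟨t, ht, rfl⟩ ⟨t', ht', h⟩
    exact ht (σ.injective h ▸ ht')
  · intro h
    exact ⟨σ.symm u, fun hc => h ⟨σ.symm u, hc, σ.apply_symm_apply u⟩,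
      σ.apply_symm_apply u⟩

lemma image_perm_compl_eq_iff (σ : Equiv.Perm (Fin ν)) (K S : Finset (Fin ν)) :
    Kᶜ.image (fun t => σ t) = Sᶜ ↔ K.image (fun t => σ t) = S := by
  rw [image_perm_compl, compl_inj_iff]

lemma mapsCut_iff (σ : Equiv.Perm (Fin ν)) (E : Finset (Fin (2 * ν))) :
    MapsCut ν σ E
      ↔ (Finset.univ.filter fun t => siteA ν t ∈ E).image (fun t => σ t)
          = Finset.univ.filter (fun u => siteB ν u ∈ E) := by
  classical
  rw [MapsCut]
  have h1 : ((Finset.univ.filter fun t => siteA ν t ∈ E).image fun t => siteB ν (σ t))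
      = ((Finset.univ.filter fun t => siteA ν t ∈ E).image (fun t => σ t)).image
          (siteB ν) := by
    rw [Finset.image_image]; rfl
  have h2 : E.filter (fun x => x.val % 2 = 1)
      = (Finset.univ.filter fun u => siteB ν u ∈ E).image (siteB ν) := by
    ext x
    simp only [Finset.mem_image, Finset.mem_filter, Finset.mem_univ, true_and]
    constructor
    · rintro ⟨hxE, hodd⟩
      have hlt : x.val / 2 < ν := by have := x.isLt; omega
      refine ⟨⟨x.val / 2, hlt⟩, ?_, ?_⟩
      · have : siteB ν ⟨x.val / 2, hlt⟩ = x := Fin.ext (by simp [siteB]; omega)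
        rw [this]; exact hxE
      · exact Fin.ext (by simp [siteB]; omega)
    · rintro ⟨u, hu, rfl⟩
      exact ⟨hu, by simp [siteB]⟩
  rw [h1, h2]
  constructor
  · exact fun h => Finset.image_injective siteB_injective h
  · exact fun h => by rw [h]

end Aux3
section Aux4

variable {ν : ℕ}

/-- `E ∩ A` as a subset of `Fin ν`. -/
def Tof (ν : ℕ) (E : Finset (Fin (2 * ν))) : Finset (Fin ν) :=
  Finset.univ.filter (fun t => siteA ν t ∈ E)

/-- `E ∩ B` as a subset of `Fin ν`. -/
def Uof (ν : ℕ) (E : Finset (Fin (2 * ν))) : Finset (Fin ν) :=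
  Finset.univ.filter (fun u => siteB ν u ∈ E)

lemma mem_Tof {E : Finset (Fin (2 * ν))} {t : Fin ν} :
    t ∈ Tof ν E ↔ siteA ν t ∈ E := by simp [Tof]

lemma mem_Uof {E : Finset (Fin (2 * ν))} {u : Fin ν} :
    u ∈ Uof ν E ↔ siteB ν u ∈ E := by simp [Uof]

lemma support_eKS_E {E : Finset (Fin (2 * ν))} {K S : Finset (Fin ν)}
    (hK : K ⊆ Tof ν E) (hS : S ⊆ Uof ν E) : (eKS ν K S).support ⊆ E := by
  refine (eKS_support_subset K S).trans (Finset.union_subset ?_ ?_)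
  · intro x hx
    obtain ⟨t, ht, rfl⟩ := Finset.mem_image.1 hx
    exact mem_Tof.1 (hK ht)
  · intro x hx
    obtain ⟨u, hu, rfl⟩ := Finset.mem_image.1 hx
    exact mem_Uof.1 (hS hu)

lemma support_eKS_compl {E : Finset (Fin (2 * ν))} {K S : Finset (Fin ν)}
    (hK : K ⊆ (Tof ν E)ᶜ) (hS : S ⊆ (Uof ν E)ᶜ) : (eKS ν K S).support ⊆ Eᶜ := by
  refine (eKS_support_subset K S).trans (Finset.union_subset ?_ ?_)
  · intro x hx
    obtain ⟨t, ht, rfl⟩ := Finset.mem_image.1 hx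
    exact Finset.mem_compl.2 fun hc => Finset.mem_compl.1 (hK ht) (mem_Tof.2 hc)
  · intro x hx
    obtain ⟨u, hu, rfl⟩ := Finset.mem_image.1 hx
    exact Finset.mem_compl.2 fun hc => Finset.mem_compl.1 (hS hu) (mem_Uof.2 hc)

lemma split_coeff {E : Finset (Fin (2 * ν))} {p q : MvPolynomial (Fin (2 * ν)) ℂ}
    (hp : p.vars ⊆ E) (hq : q.vars ⊆ Eᶜ)
    {K₁ S₁ K₂ S₂ : Finset (Fin ν)} (hK₁ : K₁ ⊆ Tof ν E) (hS₁ : S₁ ⊆ Uof ν E)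
    (hK₂ : K₂ ⊆ (Tof ν E)ᶜ) (hS₂ : S₂ ⊆ (Uof ν E)ᶜ) :
    coeff (eKS ν (K₁ ∪ K₂) (S₁ ∪ S₂)) (p * q)
      = coeff (eKS ν K₁ S₁) p * coeff (eKS ν K₂ S₂) q := by
  have hdK : Disjoint K₁ K₂ := by
    rw [Finset.disjoint_left]
    exact fun {a} h1 h2 => Finset.mem_compl.1 (hK₂ h2) (hK₁ h1)
  have hdS : Disjoint S₁ S₂ := by
    rw [Finset.disjoint_left]
    exact fun {a} h1 h2 => Finset.mem_compl.1 (hS₂ h2) (hS₁ h1)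
  rw [eKS_union hdK hdS]
  exact coeff_mul_of_separated hp hq (support_eKS_E hK₁ hS₁)
    (support_eKS_compl hK₂ hS₂)

lemma image_univ_perm (σ : Equiv.Perm (Fin ν)) :
    Finset.univ.image (fun t => σ t) = Finset.univ := by
  ext u
  simp only [Finset.mem_image, Finset.mem_univ, iff_true, true_and]
  exact ⟨σ.symm u, σ.apply_symm_apply u⟩

lemma card_Tof_eq {E : Finset (Fin (2 * ν))} {σ : Equiv.Perm (Fin ν)}
    (h : (Tof ν E).image (fun t => σ t) = Uof ν E) :
    (Tof ν E).card = (Uof ν E).card := by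
  rw [← h, Finset.card_image_of_injective _ σ.injective]

end Aux4
section Aux5

variable {ν : ℕ} {Ψ : Finset (Equiv.Perm (Fin ν))} {E : Finset (Fin (2 * ν))}

lemma coeff_rvb_ne_zero_of_mem {K S : Finset (Fin ν)} {σ : Equiv.Perm (Fin ν)}
    (hσ : σ ∈ Ψ) (h : Kᶜ.image (fun t => σ t) = S) :
    coeff (eKS ν K S) (rvbPoly ν Ψ) ≠ 0 := by
  classical
  rw [coeff_rvb]
  apply mul_ne_zero (pow_ne_zero _ (by norm_num))
  rw [Nat.cast_ne_zero, ← Nat.pos_iff_ne_zero, Finset.card_pos]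
  exact ⟨σ, Finset.mem_filter.2 ⟨hσ, h⟩⟩

lemma exists_of_coeff_rvb_ne_zero {K S : Finset (Fin ν)}
    (h : coeff (eKS ν K S) (rvbPoly ν Ψ) ≠ 0) :
    ∃ σ ∈ Ψ, Kᶜ.image (fun t => σ t) = S := by
  classical
  rw [coeff_rvb] at h
  have := right_ne_zero_of_mul h
  rw [Nat.cast_ne_zero, ← Nat.pos_iff_ne_zero, Finset.card_pos] at this
  obtain ⟨σ, hσ⟩ := this
  exact ⟨σ, (Finset.mem_filter.1 hσ).1, (Finset.mem_filter.1 hσ).2⟩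

lemma coeff_rvb_corner :
    coeff (eKS ν ∅ Finset.univ) (rvbPoly ν Ψ) = (Ψ.card : ℂ) := by
  classical
  rw [coeff_rvb]
  rw [Finset.filter_true_of_mem (fun σ _ => by
    rw [Finset.compl_empty]; exact image_univ_perm σ)]
  simp

set_option maxHeartbeats 1000000 in
lemma splits_decomp (hne : Ψ.Nonempty) (hsp : SplitsAcross (rvbPoly ν Ψ) E) :
    ∀ σ ∈ Ψ, (Tof ν E).image (fun t => σ t) = Uof ν E := by
  obtain ⟨p, q, hF, hp, hq⟩ := hsp
  set T := Tof ν E with hT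
  set U := Uof ν E with hU
  have hsplit_s : coeff (eKS ν ∅ Finset.univ) (rvbPoly ν Ψ)
      = coeff (eKS ν ∅ U) p * coeff (eKS ν ∅ Uᶜ) q := by
    conv_lhs => rw [hF, ← Finset.union_compl U,
      show (∅ : Finset (Fin ν)) = ∅ ∪ ∅ from (Finset.union_empty ∅).symm]
    exact split_coeff hp hq (Finset.empty_subset _) (Finset.Subset.refl _)
      (Finset.empty_subset _) (Finset.Subset.refl _)
  have hq_ne : coeff (eKS ν ∅ Uᶜ) q ≠ 0 := by
    have hs : coeff (eKS ν ∅ Finset.univ) (rvbPoly ν Ψ) ≠ 0 := by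
      rw [coeff_rvb_corner, Nat.cast_ne_zero, ← Nat.pos_iff_ne_zero, Finset.card_pos]
      exact hne
    rw [hsplit_s] at hs
    exact right_ne_zero_of_mul hs
  intro σ hσ
  set I := T.image (fun t => σ t) with hI
  have hIcard : I.card = T.card := Finset.card_image_of_injective _ σ.injective
  have hScompl : Tᶜ.image (fun t => σ t) = Iᶜ := image_perm_compl σ T
  -- part 1 : I ⊆ U
  have hIU : I ⊆ U := by
    have h1 : coeff (eKS ν T (Iᶜ)) (rvbPoly ν Ψ) ≠ 0 :=
      coeff_rvb_ne_zero_of_mem hσ hScompl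
    have hIc : (Iᶜ : Finset (Fin ν)) = (U \ I) ∪ (Iᶜ \ U) := by
      ext x
      simp only [Finset.mem_union, Finset.mem_sdiff, Finset.mem_compl]
      tauto
    have hsplit1 : coeff (eKS ν T (Iᶜ)) (rvbPoly ν Ψ)
        = coeff (eKS ν T (U \ I)) p * coeff (eKS ν ∅ (Iᶜ \ U)) q := by
      conv_lhs => rw [hF, hIc, show T = T ∪ ∅ from (Finset.union_empty T).symm]
      exact split_coeff hp hq (Finset.Subset.refl _) (Finset.sdiff_subset)
        (Finset.empty_subset _)
        (fun x hx => Finset.mem_compl.2 (Finset.mem_sdiff.1 hx).2)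
    have hp1 : coeff (eKS ν T (U \ I)) p ≠ 0 :=
      left_ne_zero_of_mul (hsplit1 ▸ h1)
    have h2 : coeff (eKS ν T ((U \ I) ∪ Uᶜ)) (rvbPoly ν Ψ)
        = coeff (eKS ν T (U \ I)) p * coeff (eKS ν ∅ Uᶜ) q := by
      conv_lhs => rw [hF, show T = T ∪ ∅ from (Finset.union_empty T).symm]
      exact split_coeff hp hq (Finset.Subset.refl _) (Finset.sdiff_subset)
        (Finset.empty_subset _) (Finset.Subset.refl _)
    obtain ⟨τ, hτΨ, hτ⟩ := exists_of_coeff_rvb_ne_zero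
      (h2 ▸ mul_ne_zero hp1 hq_ne)
    have hcard1 : (Tᶜ.image (fun t => τ t)).card = ν - T.card := by
      rw [Finset.card_image_of_injective _ τ.injective, Finset.card_compl,
        Fintype.card_fin]
    have hdisj : Disjoint (U \ I) (Uᶜ : Finset (Fin ν)) := by
      rw [Finset.disjoint_left]
      intro a h1' h2'
      exact Finset.mem_compl.1 h2' (Finset.mem_sdiff.1 h1').1
    have hcard2 : ((U \ I) ∪ Uᶜ).card = (U \ I).card + (ν - U.card) := by
      rw [Finset.card_union_of_disjoint hdisj, Finset.card_compl, Fintype.card_fin]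
    have hinter : (U ∩ I).card + (U \ I).card = U.card :=
      Finset.card_inter_add_card_sdiff U I
    have hTν : T.card ≤ ν := by
      have := Finset.card_le_card (Finset.subset_univ T)
      simpa [Fintype.card_fin] using this
    have hUν : U.card ≤ ν := by
      have := Finset.card_le_card (Finset.subset_univ U)
      simpa [Fintype.card_fin] using this
    have hle : (U ∩ I).card ≤ I.card :=
      Finset.card_le_card (Finset.inter_subset_right)
    have hkey : I.card ≤ (U ∩ I).card := by
      rw [hτ] at hcard1
      rw [hcard1] at hcard2
      omega
    have : U ∩ I = I :=
      Finset.eq_of_subset_of_card_le (Finset.inter_subset_right) hkey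
    rw [← this]
    exact Finset.inter_subset_left
  -- part 2 : U ⊆ I
  have hUI : U ⊆ I := by
    have h3 : coeff (eKS ν Tᶜ I) (rvbPoly ν Ψ) ≠ 0 := by
      refine coeff_rvb_ne_zero_of_mem hσ ?_
      rw [compl_compl]
    have hIsplit : I = (I ∩ U) ∪ (I \ U) := by
      ext x
      simp only [Finset.mem_union, Finset.mem_sdiff, Finset.mem_inter]
      tauto
    have hsplit3 : coeff (eKS ν Tᶜ I) (rvbPoly ν Ψ)
        = coeff (eKS ν ∅ (I ∩ U)) p * coeff (eKS ν Tᶜ (I \ U)) q := by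
      conv_lhs => rw [hF, hIsplit, show (Tᶜ : Finset (Fin ν)) = ∅ ∪ Tᶜ from
        (Finset.empty_union _).symm]
      exact split_coeff hp hq (Finset.empty_subset _) (Finset.inter_subset_right)
        (Finset.Subset.refl _)
        (fun x hx => Finset.mem_compl.2 (Finset.mem_sdiff.1 hx).2)
    have hp2 : coeff (eKS ν ∅ (I ∩ U)) p ≠ 0 :=
      left_ne_zero_of_mul (hsplit3 ▸ h3)
    have h4 : coeff (eKS ν ∅ ((I ∩ U) ∪ Uᶜ)) (rvbPoly ν Ψ)
        = coeff (eKS ν ∅ (I ∩ U)) p * coeff (eKS ν ∅ Uᶜ) q := by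
      conv_lhs => rw [hF,
        show (∅ : Finset (Fin ν)) = ∅ ∪ ∅ from (Finset.union_empty ∅).symm]
      exact split_coeff hp hq (Finset.empty_subset _) (Finset.inter_subset_right)
        (Finset.empty_subset _) (Finset.Subset.refl _)
    obtain ⟨τ, hτΨ, hτ⟩ := exists_of_coeff_rvb_ne_zero
      (h4 ▸ mul_ne_zero hp2 hq_ne)
    rw [Finset.compl_empty, image_univ_perm] at hτ
    intro u hu
    have : u ∈ (I ∩ U) ∪ Uᶜ := by rw [← hτ]; exact Finset.mem_univ u
    rcases Finset.mem_union.1 this with h' | h'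
    · exact (Finset.mem_inter.1 h').1
    · exact absurd hu (Finset.mem_compl.1 h')
  exact Finset.Subset.antisymm hIU hUI

end Aux5
section Aux6

variable {ν : ℕ} {Ψ : Finset (Equiv.Perm (Fin ν))} {E : Finset (Fin (2 * ν))}

lemma image_union_eq_iff {σ : Equiv.Perm (Fin ν)} {T U T₁ U₁ T₂ U₂ : Finset (Fin ν)}
    (hσT : T.image (fun t => σ t) = U) (h1 : T₁ ⊆ T) (h2 : U₁ ⊆ U)
    (h3 : T₂ ⊆ Tᶜ) (h4 : U₂ ⊆ Uᶜ) :
    (T₁ ∪ T₂).image (fun t => σ t) = U₁ ∪ U₂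
      ↔ (T₁.image (fun t => σ t) = U₁ ∧ T₂.image (fun t => σ t) = U₂) := by
  classical
  rw [Finset.image_union]
  constructor
  · intro h
    have hi1 : T₁.image (fun t => σ t) ⊆ U := hσT ▸ Finset.image_subset_image h1
    have hi2 : ∀ x ∈ T₂.image (fun t => σ t), x ∉ U := by
      rintro x hx hxU
      obtain ⟨t, ht, rfl⟩ := Finset.mem_image.1 hx
      rw [← hσT] at hxU
      obtain ⟨t', ht', he⟩ := Finset.mem_image.1 hxU
      exact Finset.mem_compl.1 (h3 ht) (σ.injective he ▸ ht')
    constructor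
    · ext u
      constructor
      · intro hu
        have : u ∈ U₁ ∪ U₂ := h ▸ Finset.mem_union_left _ hu
        rcases Finset.mem_union.1 this with h' | h'
        · exact h'
        · exact absurd (hi1 hu) (Finset.mem_compl.1 (h4 h'))
      · intro hu
        have : u ∈ T₁.image (fun t => σ t) ∪ T₂.image (fun t => σ t) := by
          rw [h]; exact Finset.mem_union_left _ hu
        rcases Finset.mem_union.1 this with h' | h'
        · exact h'
        · exact absurd (h2 hu) (hi2 u h')
    · ext u
      constructor
      · intro hu
        have : u ∈ U₁ ∪ U₂ := h ▸ Finset.mem_union_right _ hu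
        rcases Finset.mem_union.1 this with h' | h'
        · exact absurd (h2 h') (hi2 u hu)
        · exact h'
      · intro hu
        have : u ∈ T₁.image (fun t => σ t) ∪ T₂.image (fun t => σ t) := by
          rw [h]; exact Finset.mem_union_right _ hu
        rcases Finset.mem_union.1 this with h' | h'
        · exact absurd (hi1 h') (Finset.mem_compl.1 (h4 hu))
        · exact h'
  · rintro ⟨ha, hb⟩
    rw [ha, hb]

set_option maxHeartbeats 1000000 in
lemma splits_count {p q : MvPolynomial (Fin (2 * ν)) ℂ}
    (hF : rvbPoly ν Ψ = p * q) (hp : p.vars ⊆ E) (hq : q.vars ⊆ Eᶜ)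
    (hd : ∀ σ ∈ Ψ, (Tof ν E).image (fun t => σ t) = Uof ν E)
    {T₁ U₁ T₂ U₂ : Finset (Fin ν)}
    (h1 : T₁ ⊆ Tof ν E) (h2 : U₁ ⊆ Uof ν E)
    (h3 : T₂ ⊆ (Tof ν E)ᶜ) (h4 : U₂ ⊆ (Uof ν E)ᶜ) :
    (Ψ.filter (fun σ => T₁.image (fun t => σ t) = U₁)).card *
        (Ψ.filter (fun σ => T₂.image (fun t => σ t) = U₂)).card
      = Ψ.card *
        (Ψ.filter (fun σ =>
          T₁.image (fun t => σ t) = U₁ ∧ T₂.image (fun t => σ t) = U₂)).card := by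
  set T := Tof ν E with hT
  set U := Uof ν E with hU
  have h2' : ∀ x ∈ U₁, x ∈ U := fun x hx => h2 hx
  have h4' : ∀ x ∈ U₂, x ∉ U := fun x hx => Finset.mem_compl.1 (h4 hx)
  -- the four exponent identities
  have hU₁c : (U₁ᶜ : Finset (Fin ν)) = (U \ U₁) ∪ Uᶜ := by
    ext x
    have := h2' x
    simp only [Finset.mem_union, Finset.mem_sdiff, Finset.mem_compl]
    tauto
  have hU₂c : (U₂ᶜ : Finset (Fin ν)) = U ∪ (Uᶜ \ U₂) := by
    ext x
    have := h4' x
    simp only [Finset.mem_union, Finset.mem_sdiff, Finset.mem_compl]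
    tauto
  have hUw : ((U₁ ∪ U₂)ᶜ : Finset (Fin ν)) = (U \ U₁) ∪ (Uᶜ \ U₂) := by
    ext x
    have := h2' x
    have := h4' x
    simp only [Finset.mem_union, Finset.mem_sdiff, Finset.mem_compl]
    tauto
  -- split the four coefficients
  have eq_u : coeff (eKS ν T₁ U₁ᶜ) (rvbPoly ν Ψ)
      = coeff (eKS ν T₁ (U \ U₁)) p * coeff (eKS ν ∅ Uᶜ) q := by
    conv_lhs => rw [hF, hU₁c, show T₁ = T₁ ∪ ∅ from (Finset.union_empty T₁).symm]
    exact split_coeff hp hq h1 Finset.sdiff_subset (Finset.empty_subset _)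
      (Finset.Subset.refl _)
  have eq_v : coeff (eKS ν T₂ U₂ᶜ) (rvbPoly ν Ψ)
      = coeff (eKS ν ∅ U) p * coeff (eKS ν T₂ (Uᶜ \ U₂)) q := by
    conv_lhs => rw [hF, hU₂c, show T₂ = ∅ ∪ T₂ from (Finset.empty_union T₂).symm]
    exact split_coeff hp hq (Finset.empty_subset _) (Finset.Subset.refl _) h3
      Finset.sdiff_subset
  have eq_s : coeff (eKS ν ∅ Finset.univ) (rvbPoly ν Ψ)
      = coeff (eKS ν ∅ U) p * coeff (eKS ν ∅ Uᶜ) q := by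
    conv_lhs => rw [hF, ← Finset.union_compl U,
      show (∅ : Finset (Fin ν)) = ∅ ∪ ∅ from (Finset.union_empty ∅).symm]
    exact split_coeff hp hq (Finset.empty_subset _) (Finset.Subset.refl _)
      (Finset.empty_subset _) (Finset.Subset.refl _)
  have eq_w : coeff (eKS ν (T₁ ∪ T₂) ((U₁ ∪ U₂)ᶜ)) (rvbPoly ν Ψ)
      = coeff (eKS ν T₁ (U \ U₁)) p * coeff (eKS ν T₂ (Uᶜ \ U₂)) q := by
    conv_lhs => rw [hF, hUw]
    exact split_coeff hp hq h1 Finset.sdiff_subset h3 Finset.sdiff_subset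
  have cross : coeff (eKS ν T₁ U₁ᶜ) (rvbPoly ν Ψ)
        * coeff (eKS ν T₂ U₂ᶜ) (rvbPoly ν Ψ)
      = coeff (eKS ν (T₁ ∪ T₂) ((U₁ ∪ U₂)ᶜ)) (rvbPoly ν Ψ)
        * coeff (eKS ν ∅ Finset.univ) (rvbPoly ν Ψ) := by
    rw [eq_u, eq_v, eq_s, eq_w]; ring
  -- compute the four coefficients combinatorially
  have hcu : coeff (eKS ν T₁ U₁ᶜ) (rvbPoly ν Ψ)
      = (-1 : ℂ) ^ T₁.card
        * ((Ψ.filter (fun σ => T₁.image (fun t => σ t) = U₁)).card : ℂ) := by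
    rw [coeff_rvb, Finset.filter_congr
      (fun σ _ => image_perm_compl_eq_iff σ T₁ U₁)]
  have hcv : coeff (eKS ν T₂ U₂ᶜ) (rvbPoly ν Ψ)
      = (-1 : ℂ) ^ T₂.card
        * ((Ψ.filter (fun σ => T₂.image (fun t => σ t) = U₂)).card : ℂ) := by
    rw [coeff_rvb, Finset.filter_congr
      (fun σ _ => image_perm_compl_eq_iff σ T₂ U₂)]
  have hcw : coeff (eKS ν (T₁ ∪ T₂) ((U₁ ∪ U₂)ᶜ)) (rvbPoly ν Ψ)
      = (-1 : ℂ) ^ (T₁ ∪ T₂).card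
        * ((Ψ.filter (fun σ =>
            T₁.image (fun t => σ t) = U₁ ∧ T₂.image (fun t => σ t) = U₂)).card : ℂ) := by
    rw [coeff_rvb, Finset.filter_congr (fun σ hσ =>
      (image_perm_compl_eq_iff σ (T₁ ∪ T₂) (U₁ ∪ U₂)).trans
        (image_union_eq_iff (hd σ hσ) h1 h2 h3 h4))]
  have hdisj : Disjoint T₁ T₂ := by
    rw [Finset.disjoint_left]
    exact fun {a} ha hb => Finset.mem_compl.1 (h3 hb) (h1 ha)
  have hcard : (T₁ ∪ T₂).card = T₁.card + T₂.card :=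
    Finset.card_union_of_disjoint hdisj
  rw [hcu, hcv, hcw, coeff_rvb_corner, hcard] at cross
  have hpow : ((-1 : ℂ)) ^ (T₁.card + T₂.card) ≠ 0 := pow_ne_zero _ (by norm_num)
  have hC : (((Ψ.filter (fun σ => T₁.image (fun t => σ t) = U₁)).card : ℂ))
        * ((Ψ.filter (fun σ => T₂.image (fun t => σ t) = U₂)).card : ℂ)
      = (Ψ.card : ℂ) * ((Ψ.filter (fun σ =>
          T₁.image (fun t => σ t) = U₁ ∧ T₂.image (fun t => σ t) = U₂)).card : ℂ) := by
    apply mul_left_cancel₀ hpow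
    linear_combination cross
  exact_mod_cast hC

end Aux6
section Aux7

variable {ν : ℕ} {Ψ : Finset (Equiv.Perm (Fin ν))} {E : Finset (Fin (2 * ν))}

lemma Tof_def : Tof ν E = Finset.univ.filter (fun t => siteA ν t ∈ E) := rfl

lemma Uof_def : Uof ν E = Finset.univ.filter (fun u => siteB ν u ∈ E) := rfl

lemma Tof_compl :
    (Tof ν E)ᶜ = Finset.univ.filter (fun t => siteA ν t ∉ E) := by
  ext t; simp [Tof]

lemma Uof_compl :
    (Uof ν E)ᶜ = Finset.univ.filter (fun u => siteB ν u ∉ E) := by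
  ext u; simp [Uof]

lemma cc_ext (hne : Ψ.Nonempty) (hcc : CrissCrossVia ν Ψ E)
    {W₁ V₁ W₂ V₂ : Finset (Fin ν)}
    (h1 : W₁ ⊆ Tof ν E) (h2 : V₁ ⊆ Uof ν E)
    (h3 : W₂ ⊆ (Tof ν E)ᶜ) (h4 : V₂ ⊆ (Uof ν E)ᶜ) :
    (Ψ.filter (fun σ => W₁.image (fun t => σ t) = V₁)).card *
        (Ψ.filter (fun σ => W₂.image (fun t => σ t) = V₂)).card
      = Ψ.card *
        (Ψ.filter (fun σ =>
          W₁.image (fun t => σ t) = V₁ ∧ W₂.image (fun t => σ t) = V₂)).card := by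
  set T := Tof ν E with hT
  set U := Uof ν E with hU
  have hd : ∀ σ ∈ Ψ, T.image (fun t => σ t) = U :=
    fun σ hσ => (mapsCut_iff σ E).1 (hcc.1 σ hσ)
  have hd' : ∀ σ ∈ Ψ, Tᶜ.image (fun t => σ t) = Uᶜ := by
    intro σ hσ
    rw [image_perm_compl, hd σ hσ]
  obtain ⟨σz, hσz⟩ := hne
  have hTU : T.card = U.card := card_Tof_eq (hd σz hσz)
  by_cases hall2 : ∀ σ ∈ Ψ, W₂.image (fun t => σ t) = V₂
  · rw [Finset.filter_true_of_mem hall2,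
      Finset.filter_congr (fun σ hσ => and_iff_left (hall2 σ hσ)), mul_comm]
  by_cases hnone2 : ∀ σ ∈ Ψ, ¬(W₂.image (fun t => σ t) = V₂)
  · have e1 : Ψ.filter (fun σ =>
        W₁.image (fun t => σ t) = V₁ ∧ W₂.image (fun t => σ t) = V₂) = ∅ :=
      Finset.filter_false_of_mem (fun σ hσ h => hnone2 σ hσ h.2)
    rw [Finset.filter_false_of_mem hnone2, e1]
    simp
  by_cases hall1 : ∀ σ ∈ Ψ, W₁.image (fun t => σ t) = V₁
  · rw [Finset.filter_true_of_mem hall1,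
      Finset.filter_congr (fun σ hσ => and_iff_right (hall1 σ hσ))]
  by_cases hnone1 : ∀ σ ∈ Ψ, ¬(W₁.image (fun t => σ t) = V₁)
  · have e1 : Ψ.filter (fun σ =>
        W₁.image (fun t => σ t) = V₁ ∧ W₂.image (fun t => σ t) = V₂) = ∅ :=
      Finset.filter_false_of_mem (fun σ hσ h => hnone1 σ hσ h.1)
    rw [Finset.filter_false_of_mem hnone1, e1]
    simp
  push_neg at hall1 hnone1 hall2 hnone2
  obtain ⟨σa, hσa, hPa⟩ := hnone1
  obtain ⟨σb, hσb, hPb⟩ := hall1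
  obtain ⟨σc, hσc, hPc⟩ := hnone2
  obtain ⟨σd, hσd, hPd⟩ := hall2
  -- nondegeneracy of side 1
  have hW₁ne : W₁ ≠ ∅ := by
    rintro rfl
    rw [Finset.image_empty] at hPa hPb
    exact hPb hPa
  have hV₁ne : V₁ ≠ ∅ := by
    rintro rfl
    rw [Finset.image_eq_empty] at hPa
    exact hW₁ne hPa
  have hW₁T : W₁ ≠ T := by
    rintro rfl
    exact hPb ((hd σb hσb).trans ((hd σa hσa).symm.trans hPa))
  have hV₁U : V₁ ≠ U := by
    rintro rfl
    have hcardW : W₁.card = U.card := by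
      rw [← hPa, Finset.card_image_of_injective _ σa.injective]
    exact hW₁T (Finset.eq_of_subset_of_card_le h1 (by omega))
  -- nondegeneracy of side 2
  have hW₂ne : W₂ ≠ ∅ := by
    rintro rfl
    rw [Finset.image_empty] at hPc hPd
    exact hPd hPc
  have hV₂ne : V₂ ≠ ∅ := by
    rintro rfl
    rw [Finset.image_eq_empty] at hPc
    exact hW₂ne hPc
  have hW₂T : W₂ ≠ Tᶜ := by
    rintro rfl
    exact hPd ((hd' σd hσd).trans ((hd' σc hσc).symm.trans hPc))
  have hV₂U : V₂ ≠ Uᶜ := by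
    rintro rfl
    have hcardW : W₂.card = Uᶜ.card := by
      rw [← hPc, Finset.card_image_of_injective _ σc.injective]
    have hTU' : (Tᶜ : Finset (Fin ν)).card = (Uᶜ : Finset (Fin ν)).card := by
      rw [Finset.card_compl, Finset.card_compl, hTU]
    exact hW₂T (Finset.eq_of_subset_of_card_le h3 (by rw [hcardW, ← hTU']))
  have := hcc.2 W₁ V₁ W₂ V₂
    (by rw [← Tof_def]; exact h1)
    (Finset.nonempty_iff_ne_empty.2 hW₁ne)
    (by rw [← Tof_def]; exact hW₁T)
    (by rw [← Uof_def]; exact h2)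
    (Finset.nonempty_iff_ne_empty.2 hV₁ne)
    (by rw [← Uof_def]; exact hV₁U)
    (by rw [← Tof_compl]; exact h3)
    (Finset.nonempty_iff_ne_empty.2 hW₂ne)
    (by rw [← Tof_compl]; exact hW₂T)
    (by rw [← Uof_compl]; exact h4)
    (Finset.nonempty_iff_ne_empty.2 hV₂ne)
    (by rw [← Uof_compl]; exact hV₂U)
  exact this

end Aux7
section Aux8

variable {ν : ℕ} {Ψ : Finset (Equiv.Perm (Fin ν))} {E : Finset (Fin (2 * ν))}

lemma coeff_mul_filter {n : ℕ} {p q : MvPolynomial (Fin n) ℂ} {E : Finset (Fin n)}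
    (hp : p.vars ⊆ E) (hq : q.vars ⊆ Eᶜ) (d : Fin n →₀ ℕ) :
    coeff d (p * q)
      = coeff (d.filter (fun i => i ∈ E)) p
        * coeff (d.filter (fun i => i ∉ E)) q := by
  have hd : d = d.filter (fun i => i ∈ E) + d.filter (fun i => i ∉ E) := by
    ext i
    by_cases h : i ∈ E <;> simp [Finsupp.filter_apply, h]
  conv_lhs => rw [hd]
  refine coeff_mul_of_separated hp hq ?_ ?_
  · intro i hi
    rw [Finsupp.support_filter, Finset.mem_filter] at hi
    exact hi.2
  · intro i hi
    rw [Finsupp.support_filter, Finset.mem_filter] at hi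
    exact Finset.mem_compl.2 hi.2

set_option maxHeartbeats 2000000 in
lemma cc_splits (hcard : 2 ≤ Ψ.card) (hcc : CrissCrossVia ν Ψ E) :
    SplitsAcross (rvbPoly ν Ψ) E := by
  have hne : Ψ.Nonempty := Finset.card_pos.1 (by omega)
  set T := Tof ν E with hT
  set U := Uof ν E with hU
  have hd : ∀ σ ∈ Ψ, T.image (fun t => σ t) = U :=
    fun σ hσ => (mapsCut_iff σ E).1 (hcc.1 σ hσ)
  have hd' : ∀ σ ∈ Ψ, Tᶜ.image (fun t => σ t) = Uᶜ := by
    intro σ hσ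
    rw [image_perm_compl, hd σ hσ]
  have hs0 : ((Ψ.card : ℂ)) ≠ 0 := by
    rw [Nat.cast_ne_zero]; omega
  -- variable bounds
  have hvarsP : ∀ σ ∈ Ψ, (PP ν T σ).vars ⊆ E := by
    intro σ hσ
    refine vars_PP_subset fun t ht => ⟨mem_Tof.1 ht, ?_⟩
    have : σ t ∈ U := (hd σ hσ) ▸ Finset.mem_image_of_mem _ ht
    exact mem_Uof.1 this
  have hvarsQ : ∀ σ ∈ Ψ, (PP ν Tᶜ σ).vars ⊆ Eᶜ := by
    intro σ hσ
    refine vars_PP_subset fun t ht => ⟨?_, ?_⟩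
    · exact Finset.mem_compl.2 fun hc => Finset.mem_compl.1 ht (mem_Tof.2 hc)
    · have : σ t ∈ Uᶜ := (hd' σ hσ) ▸ Finset.mem_image_of_mem _ ht
      exact Finset.mem_compl.2 fun hc => Finset.mem_compl.1 this (mem_Uof.2 hc)
  set P : MvPolynomial (Fin (2 * ν)) ℂ := ∑ σ ∈ Ψ, PP ν T σ with hP
  set Q : MvPolynomial (Fin (2 * ν)) ℂ := ∑ σ ∈ Ψ, PP ν Tᶜ σ with hQ
  have hpv : P.vars ⊆ E :=
    (vars_sum_subset Ψ _).trans (Finset.biUnion_subset.2 hvarsP)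
  have hqv : Q.vars ⊆ Eᶜ :=
    (vars_sum_subset Ψ _).trans (Finset.biUnion_subset.2 hvarsQ)
  -- the key polynomial identity
  have claim : (Ψ.card : ℂ) • rvbPoly ν Ψ = P * Q := by
    apply MvPolynomial.ext
    intro d
    set δ₁ := d.filter (fun i => i ∈ E) with hδ₁
    set δ₂ := d.filter (fun i => i ∉ E) with hδ₂
    set A : Equiv.Perm (Fin ν) → ℂ := fun σ => coeff δ₁ (PP ν T σ) with hA
    set B : Equiv.Perm (Fin ν) → ℂ := fun σ => coeff δ₂ (PP ν Tᶜ σ) with hB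
    have hlhs : coeff d ((Ψ.card : ℂ) • rvbPoly ν Ψ)
        = (Ψ.card : ℂ) * ∑ σ ∈ Ψ, A σ * B σ := by
      rw [coeff_smul, smul_eq_mul, rvbPoly, coeff_sum]
      congr 1
      refine Finset.sum_congr rfl fun σ hσ => ?_
      rw [covPoly_eq_PP,
        show PP ν Finset.univ σ = PP ν T σ * PP ν Tᶜ σ from
          (Finset.prod_mul_prod_compl T _).symm]
      exact coeff_mul_filter (hvarsP σ hσ) (hvarsQ σ hσ) d
    have hrhs : coeff d (P * Q) = (∑ σ ∈ Ψ, A σ) * (∑ σ ∈ Ψ, B σ) := by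
      rw [coeff_mul_filter hpv hqv, hP, hQ, coeff_sum, coeff_sum]
    rw [hlhs, hrhs]
    -- now reduce to counting
    by_cases hallA : ∀ σ ∈ Ψ, A σ = 0
    · rw [Finset.sum_eq_zero hallA,
        Finset.sum_eq_zero (fun σ hσ => by rw [hallA σ hσ, zero_mul]), mul_zero,
        zero_mul]
    push_neg at hallA
    obtain ⟨σ₀, hσ₀, hA₀⟩ := hallA
    obtain ⟨K₁, S₁, hK₁T, hδ₁e⟩ := coeff_PP_shape hA₀
    have hA₀' : (if K₁ ⊆ T ∧ (T \ K₁).image (fun t => σ₀ t) = S₁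
        then ((-1 : ℂ)) ^ K₁.card else 0) ≠ 0 := by
      rw [← coeff_PP, ← hδ₁e]; exact hA₀
    have hV₁ : (T \ K₁).image (fun t => σ₀ t) = S₁ := by
      by_cases h : (T \ K₁).image (fun t => σ₀ t) = S₁
      · exact h
      · rw [if_neg (fun hc => h hc.2)] at hA₀'; exact absurd rfl hA₀'
    have hS₁U : S₁ ⊆ U := by
      rw [← hV₁, ← hd σ₀ hσ₀]
      exact Finset.image_subset_image Finset.sdiff_subset
    have hAeq : ∀ σ, A σ
        = if (T \ K₁).image (fun t => σ t) = S₁ then (-1 : ℂ) ^ K₁.card else 0 := by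
      intro σ
      show coeff δ₁ (PP ν T σ) = _
      rw [hδ₁e, coeff_PP]
      by_cases h : (T \ K₁).image (fun t => σ t) = S₁
      · rw [if_pos ⟨hK₁T, h⟩, if_pos h]
      · rw [if_neg (fun hc => h hc.2), if_neg h]
    by_cases hallB : ∀ σ ∈ Ψ, B σ = 0
    · rw [Finset.sum_eq_zero hallB,
        Finset.sum_eq_zero (fun σ hσ => by rw [hallB σ hσ, mul_zero]), mul_zero,
        mul_zero]
    push_neg at hallB
    obtain ⟨σ₁, hσ₁, hB₀⟩ := hallB
    obtain ⟨K₂, S₂, hK₂T, hδ₂e⟩ := coeff_PP_shape hB₀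
    have hB₀' : (if K₂ ⊆ Tᶜ ∧ (Tᶜ \ K₂).image (fun t => σ₁ t) = S₂
        then ((-1 : ℂ)) ^ K₂.card else 0) ≠ 0 := by
      rw [← coeff_PP, ← hδ₂e]; exact hB₀
    have hV₂ : (Tᶜ \ K₂).image (fun t => σ₁ t) = S₂ := by
      by_cases h : (Tᶜ \ K₂).image (fun t => σ₁ t) = S₂
      · exact h
      · rw [if_neg (fun hc => h hc.2)] at hB₀'; exact absurd rfl hB₀'
    have hS₂U : S₂ ⊆ Uᶜ := by
      rw [← hV₂, ← hd' σ₁ hσ₁]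
      exact Finset.image_subset_image Finset.sdiff_subset
    have hBeq : ∀ σ, B σ
        = if (Tᶜ \ K₂).image (fun t => σ t) = S₂ then (-1 : ℂ) ^ K₂.card else 0 := by
      intro σ
      show coeff δ₂ (PP ν Tᶜ σ) = _
      rw [hδ₂e, coeff_PP]
      by_cases h : (Tᶜ \ K₂).image (fun t => σ t) = S₂
      · rw [if_pos ⟨hK₂T, h⟩, if_pos h]
      · rw [if_neg (fun hc => h hc.2), if_neg h]
    -- counting
    have hsumA : (∑ σ ∈ Ψ, A σ)
        = (-1 : ℂ) ^ K₁.card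
          * ((Ψ.filter (fun σ => (T \ K₁).image (fun t => σ t) = S₁)).card : ℂ) := by
      rw [Finset.sum_congr rfl (fun σ _ => hAeq σ), ← Finset.sum_filter,
        Finset.sum_const, nsmul_eq_mul, mul_comm]
    have hsumB : (∑ σ ∈ Ψ, B σ)
        = (-1 : ℂ) ^ K₂.card
          * ((Ψ.filter (fun σ => (Tᶜ \ K₂).image (fun t => σ t) = S₂)).card : ℂ) := by
      rw [Finset.sum_congr rfl (fun σ _ => hBeq σ), ← Finset.sum_filter,
        Finset.sum_const, nsmul_eq_mul, mul_comm]
    have hsumAB : (∑ σ ∈ Ψ, A σ * B σ)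
        = (-1 : ℂ) ^ K₁.card * (-1 : ℂ) ^ K₂.card
          * ((Ψ.filter (fun σ => (T \ K₁).image (fun t => σ t) = S₁
              ∧ (Tᶜ \ K₂).image (fun t => σ t) = S₂)).card : ℂ) := by
      have : ∀ σ ∈ Ψ, A σ * B σ
          = if ((T \ K₁).image (fun t => σ t) = S₁
              ∧ (Tᶜ \ K₂).image (fun t => σ t) = S₂)
            then (-1 : ℂ) ^ K₁.card * (-1 : ℂ) ^ K₂.card else 0 := by
        intro σ _
        rw [hAeq σ, hBeq σ]
        by_cases hx : (T \ K₁).image (fun t => σ t) = S₁ <;>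
          by_cases hy : (Tᶜ \ K₂).image (fun t => σ t) = S₂ <;>
          simp [hx, hy]
      rw [Finset.sum_congr rfl this, ← Finset.sum_filter, Finset.sum_const,
        nsmul_eq_mul, mul_comm]
    have hcount := cc_ext hne hcc (Finset.sdiff_subset : T \ K₁ ⊆ T) hS₁U
      (Finset.sdiff_subset : Tᶜ \ K₂ ⊆ Tᶜ) hS₂U
    have hcountC : ((Ψ.filter (fun σ => (T \ K₁).image (fun t => σ t) = S₁)).card : ℂ)
          * ((Ψ.filter (fun σ => (Tᶜ \ K₂).image (fun t => σ t) = S₂)).card : ℂ)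
        = (Ψ.card : ℂ)
          * ((Ψ.filter (fun σ => (T \ K₁).image (fun t => σ t) = S₁
              ∧ (Tᶜ \ K₂).image (fun t => σ t) = S₂)).card : ℂ) := by
      exact_mod_cast hcount
    rw [hsumA, hsumB, hsumAB]
    linear_combination (-((-1 : ℂ) ^ K₁.card * (-1 : ℂ) ^ K₂.card)) * hcountC
  -- assemble the splitting
  refine ⟨P, (Ψ.card : ℂ)⁻¹ • Q, ?_, hpv, ?_⟩
  · rw [mul_smul_comm, ← claim, smul_smul, inv_mul_cancel₀ hs0, one_smul]
  · rw [MvPolynomial.smul_eq_C_mul]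
    refine (vars_mul _ _).trans ?_
    rw [vars_C, Finset.empty_union]
    exact hqv

end Aux8

/-- Theorem 3.7: for `Ψ` neither flat nor a pole, `F_Ψ` splits
across a nontrivial bipartition `(E,E')` iff `Ψ` is criss-cross via `E`;
consequently, `F_Ψ` splits across no nontrivial bipartition iff `Ψ` is criss-cross
via no nonempty proper `E`. -/
theorem stmt_15 (ν : ℕ) (hν : 3 ≤ ν) (Ψ : Finset (Equiv.Perm (Fin ν)))
    (hΨ : 2 ≤ Ψ.card)
    (hnotflat : ¬ ∃ E : Finset (Fin (2 * ν)), E.Nonempty ∧ E ≠ Finset.univ ∧ FlatVia ν Ψ E)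
    (hnotpole : ¬ ∃ E : Finset (Fin (2 * ν)), E.Nonempty ∧ E ≠ Finset.univ ∧ PoleVia ν Ψ E) :
    (∀ E : Finset (Fin (2 * ν)), E.Nonempty → E ≠ Finset.univ →
        (SplitsAcross (rvbPoly ν Ψ) E ↔ CrissCrossVia ν Ψ E)) ∧
    ((∀ E : Finset (Fin (2 * ν)), E.Nonempty → E ≠ Finset.univ →
          ¬ SplitsAcross (rvbPoly ν Ψ) E)
      ↔ (∀ E : Finset (Fin (2 * ν)), E.Nonempty → E ≠ Finset.univ →
          ¬ CrissCrossVia ν Ψ E)) := by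
  have main : ∀ E : Finset (Fin (2 * ν)), E.Nonempty → E ≠ Finset.univ →
      (SplitsAcross (rvbPoly ν Ψ) E ↔ CrissCrossVia ν Ψ E) := by
    intro E _ _
    constructor
    · intro hsp
      have hne : Ψ.Nonempty := Finset.card_pos.1 (by omega)
      have hd := splits_decomp hne hsp
      obtain ⟨p, q, hF, hp, hq⟩ := hsp
      refine ⟨fun σ hσ => (mapsCut_iff σ E).2 (hd σ hσ), ?_⟩
      intro T₁ U₁ T₂ U₂ hs1 _ _ hs2 _ _ hs3 _ _ hs4 _ _
      exact splits_count hF hp hq hd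
        (by rw [Tof_def]; exact hs1) (by rw [Uof_def]; exact hs2)
        (by rw [Tof_compl]; exact hs3) (by rw [Uof_compl]; exact hs4)
    · intro hcc
      exact cc_splits hΨ hcc
  refine ⟨main, ?_, ?_⟩
  · intro h E h1 h2
    exact fun hc => h E h1 h2 ((main E h1 h2).mpr hc)
  · intro h E h1 h2
    exact fun hs => h E h1 h2 ((main E h1 h2).mp hs)
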